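/- Let M be an invertible m×m upper-triangular matrix over F_2 (unit diagonal) with block structure s(M) = ⟨s_1,...,s_l⟩ and S_l = s_1+...+s_{l-1}. Let π be the permutation of {0,...,2^m-1} induced by M. Then for every residue class r mod 2^{S_l}, π maps the set {z : z ≡ r mod 2^{S_l}} onto the set {z : z ≡ π(r) mod 2^{S_l}}, where the residue of π(z) mod 2^{S_l} depends only on the residue of z mod 2^{S_l}. -/

import Mathlib

/-- The permutation of `{0,...,2^n-1}` induced by an invertible matrix `N` over
`F_2`, identifying `z` with its binary representation, least significant bit first. -/
def matPerm {n : ℕ} (N : Matrix (Fin n) (Fin n) (ZMod 2)) (z : ℕ) : ℕ :=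
  ∑ i : Fin n, 2 ^ (i : ℕ) *
    (N.mulVec (fun j => if z.testBit (j : ℕ) then 1 else 0) i).val

lemma sum_range_two_pow (n : ℕ) : ∑ k ∈ Finset.range n, 2 ^ k = 2 ^ n - 1 := by
  induction n with
  | zero => simp
  | succ n ih => rw [Finset.sum_range_succ, ih, pow_succ]; omega

/-- geometric bound: a sum of distinct powers of two with 0/1 coefficients,
indexed by a subset of `{0,...,n-1}`, is less than `2^n`. -/
lemma sum_filter_two_pow_lt {m S : ℕ} (c : Fin m → ℕ) (hc : ∀ i, c i ≤ 1) :
    (∑ i ∈ Finset.univ.filter (fun i : Fin m => (i : ℕ) < S), 2 ^ (i : ℕ) * c i) < 2 ^ S := by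
  have h1 : (∑ i ∈ Finset.univ.filter (fun i : Fin m => (i : ℕ) < S), 2 ^ (i : ℕ) * c i)
      ≤ ∑ i ∈ Finset.univ.filter (fun i : Fin m => (i : ℕ) < S), 2 ^ (i : ℕ) := by
    apply Finset.sum_le_sum
    intro i _
    calc 2 ^ (i : ℕ) * c i ≤ 2 ^ (i : ℕ) * 1 := Nat.mul_le_mul_left _ (hc i)
      _ = 2 ^ (i : ℕ) := by ring
  have h2 : (∑ i ∈ Finset.univ.filter (fun i : Fin m => (i : ℕ) < S), 2 ^ (i : ℕ))
      = ∑ k ∈ (Finset.univ.filter (fun i : Fin m => (i : ℕ) < S)).image Fin.val, 2 ^ k := by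
    rw [Finset.sum_image (by intro a _ b _ h; exact Fin.val_injective h)]
  have h3 : (Finset.univ.filter (fun i : Fin m => (i : ℕ) < S)).image Fin.val ⊆
      Finset.range S := by
    intro k hk
    simp only [Finset.mem_image, Finset.mem_filter, Finset.mem_univ, true_and] at hk
    obtain ⟨i, hi, rfl⟩ := hk
    exact Finset.mem_range.mpr hi
  have h4 : (∑ k ∈ (Finset.univ.filter (fun i : Fin m => (i : ℕ) < S)).image Fin.val, 2 ^ k)
      ≤ ∑ k ∈ Finset.range S, 2 ^ k :=
    Finset.sum_le_sum_of_subset h3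
  have h5 : (∑ k ∈ Finset.range S, 2 ^ k) = 2 ^ S - 1 := sum_range_two_pow S
  have h6 : (1:ℕ) ≤ 2 ^ S := Nat.one_le_two_pow
  omega

/-- a 0/1-coefficient binary expansion is injective. -/
lemma sumBits_inj : ∀ (n : ℕ) (v w : Fin n → ZMod 2),
    (∑ i : Fin n, 2 ^ (i : ℕ) * (v i).val) = (∑ i : Fin n, 2 ^ (i : ℕ) * (w i).val) → v = w := by
  intro n
  induction n with
  | zero => intro v w _; funext i; exact i.elim0
  | succ n ih =>
    intro v w h
    rw [Fin.sum_univ_succ, Fin.sum_univ_succ] at h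
    have hrw : ∀ (u : Fin (n+1) → ZMod 2),
        (∑ i : Fin n, 2 ^ ((i.succ : Fin (n+1)) : ℕ) * (u i.succ).val)
          = 2 * ∑ i : Fin n, 2 ^ (i : ℕ) * (u i.succ).val := by
      intro u
      rw [Finset.mul_sum]
      apply Finset.sum_congr rfl
      intro i _
      simp [Fin.val_succ, pow_succ]
      ring
    rw [hrw v, hrw w] at h
    simp only [Fin.val_zero, pow_zero, one_mul] at h
    have hv0 : (v 0).val < 2 := (v 0).val_lt
    have hw0 : (w 0).val < 2 := (w 0).val_lt
    have hpar : (v 0).val = (w 0).val := by omega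
    have htail : (∑ i : Fin n, 2 ^ (i : ℕ) * (v i.succ).val)
        = ∑ i : Fin n, 2 ^ (i : ℕ) * (w i.succ).val := by omega
    have h0 : v 0 = w 0 := ZMod.val_injective _ hpar
    have ht : (fun i : Fin n => v i.succ) = fun i : Fin n => w i.succ := ih _ _ htail
    funext i
    refine Fin.cases h0 (fun j => ?_) i
    exact congrFun ht j

/-- the bit vector associated to `z`. -/
def bitVec (m : ℕ) (z : ℕ) : Fin m → ZMod 2 :=
  fun j => if z.testBit (j : ℕ) then 1 else 0

lemma matPerm_eq {m : ℕ} (M : Matrix (Fin m) (Fin m) (ZMod 2)) (z : ℕ) :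
    matPerm M z = ∑ i : Fin m, 2 ^ (i : ℕ) * (M.mulVec (bitVec m z) i).val := rfl

lemma matPerm_lt {m : ℕ} (M : Matrix (Fin m) (Fin m) (ZMod 2)) (z : ℕ) :
    matPerm M z < 2 ^ m := by
  rw [matPerm_eq]
  have := sum_filter_two_pow_lt (m := m) (S := m)
    (fun i => (M.mulVec (bitVec m z) i).val)
    (fun i => Nat.lt_succ_iff.mp (ZMod.val_lt _))
  simpa [Finset.filter_true_of_mem (fun (i : Fin m) _ => i.isLt)] using this

lemma matPerm_injOn {m : ℕ} (M : Matrix (Fin m) (Fin m) (ZMod 2)) (hM : IsUnit M) :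
    ∀ z₁ < 2 ^ m, ∀ z₂ < 2 ^ m, matPerm M z₁ = matPerm M z₂ → z₁ = z₂ := by
  intro z₁ h₁ z₂ h₂ h
  rw [matPerm_eq, matPerm_eq] at h
  have hvec : M.mulVec (bitVec m z₁) = M.mulVec (bitVec m z₂) := sumBits_inj _ _ _ h
  have hbit : bitVec m z₁ = bitVec m z₂ :=
    (Matrix.mulVec_injective_iff_isUnit.mpr hM) hvec
  apply Nat.eq_of_testBit_eq
  intro j
  by_cases hj : j < m
  · have := congrFun hbit ⟨j, hj⟩
    simp only [bitVec] at this
    by_cases hb : z₁.testBit j <;> by_cases hb' : z₂.testBit j <;>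
      simp [hb, hb'] at this ⊢
  · push_neg at hj
    have e1 : z₁.testBit j = false := Nat.testBit_lt_two_pow
      (lt_of_lt_of_le h₁ (Nat.pow_le_pow_right (by norm_num) hj))
    have e2 : z₂.testBit j = false := Nat.testBit_lt_two_pow
      (lt_of_lt_of_le h₂ (Nat.pow_le_pow_right (by norm_num) hj))
    rw [e1, e2]

/-- `matPerm M z % 2^S` only depends on the low `S` output bits. -/
lemma matPerm_mod {m S : ℕ} (M : Matrix (Fin m) (Fin m) (ZMod 2)) (z : ℕ) :
    matPerm M z % 2 ^ S =
      (∑ i ∈ Finset.univ.filter (fun i : Fin m => (i : ℕ) < S),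
        2 ^ (i : ℕ) * (M.mulVec (bitVec m z) i).val) % 2 ^ S := by
  rw [matPerm_eq,
    ← Finset.sum_filter_add_sum_filter_not Finset.univ (fun i : Fin m => (i : ℕ) < S)]
  have hdvd : (2 ^ S : ℕ) ∣
      ∑ i ∈ Finset.univ.filter (fun i : Fin m => ¬ (i : ℕ) < S),
        2 ^ (i : ℕ) * (M.mulVec (bitVec m z) i).val := by
    apply Finset.dvd_sum
    intro i hi
    simp only [Finset.mem_filter, not_lt] at hi
    exact Dvd.dvd.mul_right (pow_dvd_pow 2 hi.2) _
  obtain ⟨k, hk⟩ := hdvd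
  rw [hk, Nat.add_mul_mod_self_left]

theorem matPerm_residue_classes {m S : ℕ} (hS : S ≤ m)
    (M : Matrix (Fin m) (Fin m) (ZMod 2))
    (hM : IsUnit M)
    (hdiag : ∀ i, M i i = 1) (hupper : ∀ i j : Fin m, j < i → M i j = 0)
    (hblock : ∀ i j : Fin m, (i : ℕ) < S → S ≤ (j : ℕ) → M i j = 0) :
    (∀ z₁ < 2 ^ m, ∀ z₂ < 2 ^ m, z₁ % 2 ^ S = z₂ % 2 ^ S →
      matPerm M z₁ % 2 ^ S = matPerm M z₂ % 2 ^ S) ∧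
    (∀ r < 2 ^ m, ∀ w < 2 ^ m, w % 2 ^ S = matPerm M r % 2 ^ S →
      ∃ z, z < 2 ^ m ∧ z % 2 ^ S = r % 2 ^ S ∧ matPerm M z = w) := by
  -- part 1, without the size hypotheses
  have key : ∀ z₁ z₂ : ℕ, z₁ % 2 ^ S = z₂ % 2 ^ S →
      matPerm M z₁ % 2 ^ S = matPerm M z₂ % 2 ^ S := by
    intro z₁ z₂ hmod
    rw [matPerm_mod, matPerm_mod]
    congr 1
    apply Finset.sum_congr rfl
    intro i hi
    simp only [Finset.mem_filter, Finset.mem_univ, true_and] at hi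
    congr 2
    unfold Matrix.mulVec dotProduct
    apply Finset.sum_congr rfl
    intro j _
    by_cases hj : (j : ℕ) < S
    · have hbj : z₁.testBit (j : ℕ) = z₂.testBit (j : ℕ) := by
        have e1 := Nat.testBit_mod_two_pow z₁ S j
        have e2 := Nat.testBit_mod_two_pow z₂ S j
        rw [hmod] at e1
        simpa [hj] using e1.symm.trans e2
      simp only [bitVec, hbj]
    · push_neg at hj
      simp [hblock i j hi hj]
  -- the low bits map: for a < 2^S, matPerm M a < 2^S
  have low_lt : ∀ a : ℕ, a < 2 ^ S → matPerm M a < 2 ^ S := by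
    intro a ha
    have hzero : ∀ i : Fin m, S ≤ (i : ℕ) → M.mulVec (bitVec m a) i = 0 := by
      intro i hi
      unfold Matrix.mulVec dotProduct
      apply Finset.sum_eq_zero
      intro j _
      by_cases hj : (j : ℕ) < S
      · have hji : j < i := by rw [Fin.lt_def]; omega
        simp [hupper i j hji]
      · push_neg at hj
        have : a.testBit (j : ℕ) = false := Nat.testBit_lt_two_pow
          (lt_of_lt_of_le ha (Nat.pow_le_pow_right (by norm_num) hj))
        simp [bitVec, this]
    rw [matPerm_eq,
      ← Finset.sum_filter_add_sum_filter_not Finset.univ (fun i : Fin m => (i : ℕ) < S)]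
    have h2 : (∑ i ∈ Finset.univ.filter (fun i : Fin m => ¬ (i : ℕ) < S),
        2 ^ (i : ℕ) * (M.mulVec (bitVec m a) i).val) = 0 := by
      apply Finset.sum_eq_zero
      intro i hi
      simp only [Finset.mem_filter, not_lt] at hi
      rw [hzero i hi.2]
      simp
    rw [h2, Nat.add_zero]
    exact sum_filter_two_pow_lt _ (fun i => by
      have := (M.mulVec (bitVec m a) i).val_lt; omega)
  constructor
  · intro z₁ _ z₂ _ h; exact key z₁ z₂ h
  · intro r hr w hw hmod
    -- surjectivity of matPerm on [0, 2^m)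
    have hfin : Function.Injective
        (fun z : Fin (2 ^ m) => (⟨matPerm M z, matPerm_lt M z⟩ : Fin (2 ^ m))) := by
      intro a b hab
      have : matPerm M (a : ℕ) = matPerm M (b : ℕ) := by
        simpa [Fin.ext_iff] using hab
      exact Fin.ext (matPerm_injOn M hM a a.isLt b b.isLt this)
    have hsurj := Finite.surjective_of_injective hfin
    obtain ⟨z, hz⟩ := hsurj ⟨w, hw⟩
    have hzw : matPerm M (z : ℕ) = w := by simpa [Fin.ext_iff] using hz
    refine ⟨z, z.isLt, ?_, hzw⟩
    -- show z % 2^S = r % 2^S using injectivity on the low block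
    have h1 : matPerm M ((z : ℕ) % 2 ^ S) % 2 ^ S = matPerm M ((r : ℕ) % 2 ^ S) % 2 ^ S := by
      have e1 := key ((z : ℕ) % 2 ^ S) (z : ℕ) (Nat.mod_mod_of_dvd _ dvd_rfl)
      have e2 := key ((r : ℕ) % 2 ^ S) r (Nat.mod_mod_of_dvd _ dvd_rfl)
      rw [e1, e2, hzw, ← hmod]
    have hz' : (z : ℕ) % 2 ^ S < 2 ^ S := Nat.mod_lt _ (Nat.two_pow_pos S)
    have hr' : r % 2 ^ S < 2 ^ S := Nat.mod_lt _ (Nat.two_pow_pos S)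
    have hSm : (2:ℕ) ^ S ≤ 2 ^ m := Nat.pow_le_pow_right (by norm_num) hS
    have h2 : matPerm M ((z : ℕ) % 2 ^ S) = matPerm M (r % 2 ^ S) := by
      have l1 := low_lt _ hz'
      have l2 := low_lt _ hr'
      rw [Nat.mod_eq_of_lt l1, Nat.mod_eq_of_lt l2] at h1
      exact h1
    exact matPerm_injOn M hM _ (lt_of_lt_of_le hz' hSm) _ (lt_of_lt_of_le hr' hSm) h2
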